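/- Let A be an abelian category with enough projectives and V a covariantly finite subcategory with Ext¹(V, Fac V) = 0. Then the subcategory P(Fac V) of Ext-projective objects of Fac V is a support τ-tilting subcategory containing V; in particular every projective P admits an exact sequence P →m M⁰ → M¹ → 0 with M⁰, M¹ ∈ P(Fac V) and m a left P(Fac V)-approximation. -/

import Mathlib

open CategoryTheory Limits Opposite

noncomputable section

universe v u

variable {C : Type u} [Category.{v} C] [Abelian C] [EnoughProjectives C]

attribute [local instance] CategoryTheory.Abelian.hasFiniteBiproducts

/-- `Fac M`: quotients of finite direct sums of objects of `M`. -/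
def Fac (M : Set C) : Set C :=
  {X | ∃ (n : ℕ) (f : Fin n → C), (∀ i, f i ∈ M) ∧
    haveI : HasBiproductsOfShape (Fin n) C := HasFiniteBiproducts.out n
    ∃ e : (⨁ f) ⟶ X, Epi e}

/-- Vanishing of `Ext¹(X, Y)`. -/
def ext1Zero (X Y : C) : Prop := Subsingleton (((Ext ℤ C 1).obj (op X)).obj Y)

/-- Vanishing of `Ext²(X, Y)`. -/
def ext2Zero (X Y : C) : Prop := Subsingleton (((Ext ℤ C 2).obj (op X)).obj Y)

/-- `v : P ⟶ V₀` is a left `M`-approximation. -/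
def IsLeftApprox (M : Set C) {P V₀ : C} (v : P ⟶ V₀) : Prop :=
  ∀ V' ∈ M, ∀ h : P ⟶ V', ∃ t : V₀ ⟶ V', v ≫ t = h

/-- `u : U₀ ⟶ X` is a right `M`-approximation. -/
def IsRightApprox (M : Set C) {U₀ X : C} (u : U₀ ⟶ X) : Prop :=
  ∀ M' ∈ M, ∀ h : M' ⟶ X, ∃ t : M' ⟶ U₀, t ≫ u = h

/-- The Ext-projective objects of `S`. -/
def ExtProj (S : Set C) : Set C := {D ∈ S | ∀ Z ∈ S, ext1Zero D Z}

/-- `M` is τ-rigid: `Ext¹(M, Fac M) = 0`. -/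
def TauRigid (M : Set C) : Prop := ∀ M₀ ∈ M, ∀ X ∈ Fac M, ext1Zero M₀ X

/-- `P` admits an exact sequence `P ⟶ Ma ⟶ Mb ⟶ 0` with `Ma, Mb ∈ M` and the
first map a left `M`-approximation. -/
def HasApproxSeq (M : Set C) (P : C) : Prop :=
  ∃ M₀ ∈ M, ∃ M₁ ∈ M, ∃ (m : P ⟶ M₀) (g : M₀ ⟶ M₁) (w : m ≫ g = 0),
    (ShortComplex.mk m g w).Exact ∧ Epi g ∧ IsLeftApprox M m

/-- `M` is a support τ-tilting subcategory. -/
def SupportTauTilting (M : Set C) : Prop :=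
  TauRigid M ∧ ∀ P : C, Projective P → HasApproxSeq M P

/-- `0 ⟶ X ⟶ Y ⟶ Z ⟶ 0` is a short exact sequence. -/
def SES {X Y Z : C} (f : X ⟶ Y) (g : Y ⟶ Z) : Prop :=
  ∃ w : f ≫ g = 0, (ShortComplex.mk f g w).Exact ∧ Mono f ∧ Epi g

/-- `U` is hereditary: `Ext²(U, −) = 0`. -/
def Hereditary1 (U : Set C) : Prop := ∀ U₀ ∈ U, ∀ X : C, ext2Zero U₀ X

/-- `U` is partial tilting. -/
def PartialTilting (U : Set C) : Prop :=
  Hereditary1 U ∧ ∀ U₀ ∈ U, ∀ U₁ ∈ U, ext1Zero U₀ U₁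

/-- `U` is tilting. -/
def Tilting (U : Set C) : Prop :=
  PartialTilting U ∧ ∀ P : C, Projective P →
    ∃ Ua ∈ U, ∃ Ub ∈ U, ∃ (i : P ⟶ Ua) (p : Ua ⟶ Ub), SES i p

/-- `U^⊥₁ = {X | Ext¹(U, X) = 0}`. -/
def Perp1 (U : Set C) : Set C := {X | ∀ U₀ ∈ U, ext1Zero U₀ X}

/-- `M` is closed under finite direct sums and direct summands. -/
def AdditivelyClosed (M : Set C) : Prop :=
  (∀ (n : ℕ) (f : Fin n → C), (∀ i, f i ∈ M) →
    haveI : HasBiproductsOfShape (Fin n) C := HasFiniteBiproducts.out n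
    (⨁ f) ∈ M) ∧
  (∀ M₀ ∈ M, ∀ (X : C) (r : M₀ ⟶ X) (s : X ⟶ M₀), s ≫ r = 𝟙 X → X ∈ M)

/-- The additive closure of a class of objects: direct summands of finite
direct sums of its objects. -/
def AddClosure (X : Set C) : Set C :=
  {Y | ∃ (n : ℕ) (f : Fin n → C), (∀ i, f i ∈ X) ∧
    haveI : HasBiproductsOfShape (Fin n) C := HasFiniteBiproducts.out n
    ∃ (r : (⨁ f) ⟶ Y) (s : Y ⟶ ⨁ f), s ≫ r = 𝟙 Y}



lemma moduleCat_subsingleton_of_isZero {M : ModuleCat ℤ} (h : IsZero M) : Subsingleton M := by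
  have h0 : (𝟙 M) = 0 := h.eq_of_src _ _
  constructor; intro a b
  have ha : a = (𝟙 M) a := rfl
  have hb : b = (𝟙 M) b := rfl
  rw [ha, hb, h0]; rfl

set_option linter.unusedSectionVars false in
lemma linearYonedaObj_d_apply (Q : ChainComplex C ℕ) (X : C) (i j : ℕ) (ψ : Q.X i ⟶ X) :
    ((Q.linearYonedaObj ℤ X).d i j) ψ = Q.d j i ≫ ψ := by
  simp [ChainComplex.linearYonedaObj]
  rfl

lemma ext1Zero_iff_hom (A X : C) (P : ProjectiveResolution A) :
    ext1Zero A X ↔ ∀ φ : P.complex.X 1 ⟶ X, P.complex.d 2 1 ≫ φ = 0 →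
      ∃ ψ : P.complex.X 0 ⟶ X, P.complex.d 1 0 ≫ ψ = φ := by
  have e : ((Ext ℤ C 1).obj (op A)).obj X ≅ (P.complex.linearYonedaObj ℤ X).homology 1 :=
    P.isoExt 1 X
  have hd01 : ∀ (ψ : P.complex.X 0 ⟶ X),
      ((P.complex.linearYonedaObj ℤ X).d 0 1) ψ = P.complex.d 1 0 ≫ ψ :=
    fun ψ => linearYonedaObj_d_apply _ _ _ _ ψ
  have hd12 : ∀ (ψ : P.complex.X 1 ⟶ X),
      ((P.complex.linearYonedaObj ℤ X).d 1 2) ψ = P.complex.d 2 1 ≫ ψ :=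
    fun ψ => linearYonedaObj_d_apply _ _ _ _ ψ
  have h1 : ext1Zero A X ↔ IsZero ((P.complex.linearYonedaObj ℤ X).homology 1) := by
    unfold ext1Zero
    constructor
    · intro h
      haveI := h
      exact (ModuleCat.isZero_of_subsingleton _).of_iso e.symm
    · intro h
      exact moduleCat_subsingleton_of_isZero (h.of_iso e)
  rw [h1, ← HomologicalComplex.exactAt_iff_isZero_homology,
    (P.complex.linearYonedaObj ℤ X).exactAt_iff' 0 1 2 (by simp) (by simp), ShortComplex.moduleCat_exact_iff]
  constructor
  · intro h φ hφ
    obtain ⟨ψ, hψ⟩ := h φ (by show ((P.complex.linearYonedaObj ℤ X).d 1 2) φ = 0; rw [hd12]; exact hφ)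
    exact ⟨ψ, (hd01 ψ).symm.trans hψ⟩
  · intro h φ hφ
    have hφ' : P.complex.d 2 1 ≫ (φ : P.complex.X 1 ⟶ X) = 0 := by
      rw [← hd12 φ]; exact hφ
    obtain ⟨ψ, hψ⟩ := h φ hφ'
    exact ⟨ψ, by show ((P.complex.linearYonedaObj ℤ X).d 0 1) ψ = φ; rw [hd01]; exact hψ⟩



def ExtProp (X : C) {Q A : C} (π : Q ⟶ A) : Prop :=
  ∀ h : kernel π ⟶ X, ∃ g : Q ⟶ X, kernel.ι π ≫ g = h

set_option linter.unusedSectionVars false in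
lemma extProp_transfer {A X Q Q' : C} [Projective Q] [Projective Q']
    (π : Q ⟶ A) (π' : Q' ⟶ A) [Epi π] [Epi π'] (H : ExtProp X π) : ExtProp X π' := by
  intro h'
  have ha : Projective.factorThru π' π ≫ π = π' := Projective.factorThru_comp π' π
  have ha' : Projective.factorThru π π' ≫ π' = π := Projective.factorThru_comp π π'
  set a := Projective.factorThru π' π
  set a' := Projective.factorThru π π'
  have hb0 : (kernel.ι π' ≫ a) ≫ π = 0 := by rw [Category.assoc, ha, kernel.condition]
  set b : kernel π' ⟶ kernel π := kernel.lift π (kernel.ι π' ≫ a) hb0 with hbdef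
  have hb : b ≫ kernel.ι π = kernel.ι π' ≫ a := kernel.lift_ι _ _ _
  have hb0' : (kernel.ι π ≫ a') ≫ π' = 0 := by rw [Category.assoc, ha', kernel.condition]
  set b' : kernel π ⟶ kernel π' := kernel.lift π' (kernel.ι π ≫ a') hb0'
  have hb' : b' ≫ kernel.ι π' = kernel.ι π ≫ a' := kernel.lift_ι _ _ _
  have ht0 : (a ≫ a' - 𝟙 Q') ≫ π' = 0 := by
    rw [Preadditive.sub_comp, Category.assoc, ha', ha, Category.id_comp, sub_self]
  set t : Q' ⟶ kernel π' := kernel.lift π' _ ht0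
  have ht : t ≫ kernel.ι π' = a ≫ a' - 𝟙 Q' := kernel.lift_ι _ _ _
  obtain ⟨g, hg⟩ := H (b' ≫ h')
  have key : kernel.ι π' ≫ t = b ≫ b' - 𝟙 (kernel π') := by
    rw [← cancel_mono (kernel.ι π')]
    rw [Category.assoc, ht, Preadditive.comp_sub, Category.comp_id,
      Preadditive.sub_comp, Category.id_comp, Category.assoc, hb', ← Category.assoc b (kernel.ι π) a', hb, Category.assoc]
  refine ⟨a ≫ g - t ≫ h', ?_⟩
  rw [Preadditive.comp_sub, ← Category.assoc, ← Category.assoc, key, ← hb, Category.assoc, hg,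
    Preadditive.sub_comp, Category.id_comp, Category.assoc, sub_sub_cancel]


set_option linter.unusedSectionVars false in
lemma ext1Zero_iff_extProp (A X : C) {Q : C} [Projective Q] (π : Q ⟶ A) [Epi π] :
    ext1Zero A X ↔ ExtProp X π := by
  have P := ProjectiveResolution.of A
  rw [ext1Zero_iff_hom A X P]
  have cond : P.complex.d 1 0 ≫ P.π.f 0 = 0 := P.complex_d_comp_π_f_zero
  set e : P.complex.X 1 ⟶ kernel (P.π.f 0) := kernel.lift (P.π.f 0) (P.complex.d 1 0) cond
    with hedef
  have he : e ≫ kernel.ι (P.π.f 0) = P.complex.d 1 0 := kernel.lift_ι _ _ _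
  haveI hepi : Epi e := by
    rw [epi_iff_surjective_up_to_refinements]
    intro Z z
    obtain ⟨Z', ρ, hρ, x₁, hx⟩ := P.exact₀.exact_up_to_refinements (z ≫ kernel.ι (P.π.f 0))
      (by rw [Category.assoc, kernel.condition, Limits.comp_zero])
    refine ⟨Z', ρ, hρ, x₁, ?_⟩
    rw [← cancel_mono (kernel.ι (P.π.f 0)), Category.assoc, Category.assoc, he]
    exact hx
  have wde : P.complex.d 2 1 ≫ e = 0 := by
    rw [← cancel_mono (kernel.ι (P.π.f 0)), Category.assoc, he, Limits.zero_comp]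
    exact P.complex.d_comp_d 2 1 0
  have hexact : (ShortComplex.mk (P.complex.d 2 1) e wde).Exact := by
    rw [ShortComplex.exact_iff_exact_up_to_refinements]
    intro Z x₂ hx₂
    obtain ⟨Z', ρ, hρ, x₁, hx⟩ := (P.exact_succ 0).exact_up_to_refinements x₂
      (by show x₂ ≫ P.complex.d 1 0 = 0; rw [← he, ← Category.assoc, hx₂, Limits.zero_comp])
    exact ⟨Z', ρ, hρ, x₁, hx⟩
  haveI : Epi (X := Q) (Y := ((ChainComplex.single₀ C).obj A).X 0) π := by
    have h0 : Epi π := inferInstance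
    exact h0
  constructor
  · intro h
    refine extProp_transfer (P.π.f 0) π ?_
    intro k
    obtain ⟨ψ, hψ⟩ := h (e ≫ k) (by rw [← Category.assoc, wde, Limits.zero_comp])
    refine ⟨ψ, ?_⟩
    rw [← cancel_epi e, ← Category.assoc, he, hψ]
  · intro h
    have h₀ : ExtProp X (P.π.f 0) := extProp_transfer (A := ((ChainComplex.single₀ C).obj A).X 0) π (P.π.f 0) h
    intro φ hφ
    obtain ⟨k, hk⟩ := hexact.desc' φ hφ
    obtain ⟨g, hg⟩ := h₀ k
    exact ⟨g, by rw [← he, Category.assoc, hg]; exact hk⟩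

lemma mem_fac_self {M : Set C} {W : C} (hW : W ∈ M) : W ∈ Fac M := by
  haveI : HasBiproductsOfShape (Fin 1) C := HasFiniteBiproducts.out 1
  refine ⟨1, fun _ => W, fun _ => hW, ⟨biproduct.desc fun _ => 𝟙 W, ?_⟩⟩
  exact epi_of_epi_fac (biproduct.ι_desc (fun _ : Fin 1 => 𝟙 W) 0)

lemma fac_quot {M : Set C} {X Y : C} (hX : X ∈ Fac M) (e : X ⟶ Y) (he : Epi e) : Y ∈ Fac M := by
  obtain ⟨n, f, hf, E, hE⟩ := hX
  haveI : HasBiproductsOfShape (Fin n) C := HasFiniteBiproducts.out n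
  haveI := hE; haveI := he
  exact ⟨n, f, hf, E ≫ e, epi_comp E e⟩

lemma fac_mono {M N : Set C} (h : M ⊆ N) : Fac M ⊆ Fac N := by
  rintro X ⟨n, f, hf, E, hE⟩
  exact ⟨n, f, fun i => h (hf i), E, hE⟩

lemma fac_fac {M : Set C} : Fac (Fac M) ⊆ Fac M := by
  rintro X ⟨n, D, hD, E, hE⟩
  haveI : HasBiproductsOfShape (Fin n) C := HasFiniteBiproducts.out n
  haveI := hE
  choose m f hf e he using hD
  haveI : ∀ i, HasBiproductsOfShape (Fin (m i)) C := fun i => HasFiniteBiproducts.out _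
  haveI : ∀ i, Epi (e i) := he
  set I := (Σ i : Fin n, Fin (m i)) with hI
  set q : Fin (Fintype.card I) ≃ I := (Fintype.equivFin I).symm with hq
  refine ⟨Fintype.card I, fun k => f (q k).1 (q k).2, fun k => hf _ _, ?_⟩
  haveI : HasBiproductsOfShape (Fin (Fintype.card I)) C := HasFiniteBiproducts.out _
  have hmapepi : Epi (biproduct.map e) := by
    constructor
    intro Z u v huv
    apply biproduct.hom_ext'
    intro i
    rw [← cancel_epi (e i)]
    have h2 : e i ≫ biproduct.ι D i ≫ u = e i ≫ biproduct.ι D i ≫ v := by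
      rw [← biproduct.ι_map_assoc, ← biproduct.ι_map_assoc, huv]
    exact h2
  set σ := biproductBiproductIso (fun i : Fin n => Fin (m i)) f with hσ
  haveI : HasBiproduct (fun p : I => f p.1 p.2) := inferInstance
  set w : (⨁ fun k => f (q k).1 (q k).2) ≅ ⨁ (fun p : I => f p.1 p.2) :=
    biproduct.whiskerEquiv (f := fun k => f (q k).1 (q k).2) (g := fun p : I => f p.1 p.2)
      q (fun k => Iso.refl _) with hw
  refine ⟨w.hom ≫ σ.inv ≫ biproduct.map e ≫ E, ?_⟩
  haveI := hmapepi
  haveI : Epi (biproduct.map e ≫ E) := epi_comp _ _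
  haveI : Epi (σ.inv ≫ biproduct.map e ≫ E) := epi_comp _ _
  exact epi_comp _ _

theorem stmt4 (V : Set C)
    (hcov : ∀ X : C, ∃ V₀ ∈ V, ∃ v : X ⟶ V₀, IsLeftApprox V v)
    (hrig : TauRigid V) :
    V ⊆ ExtProj (Fac V) ∧ SupportTauTilting (ExtProj (Fac V)) := by
  have hsub : ExtProj (Fac V) ⊆ Fac V := fun D hD => hD.1
  refine ⟨fun W hW => ⟨mem_fac_self hW, fun Z hZ => hrig W hW Z hZ⟩, ?_, ?_⟩
  · -- TauRigid
    intro M₀ hM₀ X hX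
    exact hM₀.2 X (fac_fac (fac_mono hsub hX))
  · intro P hP
    obtain ⟨V₀, hV₀, p, hap⟩ := hcov P
    haveI := hP
    -- p is a left `Fac V`-approximation
    have keyLift : ∀ X ∈ Fac V, ∀ h : P ⟶ X, ∃ t : V₀ ⟶ X, p ≫ t = h := by
      rintro X ⟨n, f, hf, E, hE⟩ h
      haveI : HasBiproductsOfShape (Fin n) C := HasFiniteBiproducts.out n
      haveI := hE
      have hg : Projective.factorThru h E ≫ E = h := Projective.factorThru_comp h E
      set g : P ⟶ ⨁ f := Projective.factorThru h E with hgdef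
      have hcomp : ∀ i, ∃ t : V₀ ⟶ f i, p ≫ t = g ≫ biproduct.π f i :=
        fun i => hap (f i) (hf i) _
      choose t ht using hcomp
      refine ⟨biproduct.lift t ≫ E, ?_⟩
      rw [← hg, ← Category.assoc]
      congr 1
      apply biproduct.hom_ext
      intro i
      rw [Category.assoc, biproduct.lift_π, ht i]
    -- Ext-projectivity of the cokernel
    have hCcExt : ∀ X ∈ Fac V, ext1Zero (cokernel p) X := by
      intro X hX
      set R := Projective.over V₀ with hR
      set r : R ⟶ V₀ := Projective.π V₀ with hrdef
      set e : R ⟶ cokernel p := r ≫ cokernel.π p with hedef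
      haveI : Epi e := by
        show Epi (r ≫ cokernel.π p); exact epi_comp _ _
      rw [ext1Zero_iff_extProp (cokernel p) X e]
      intro h
      have hu0 : (kernel.ι e ≫ r) ≫ cokernel.π p = 0 := by
        rw [Category.assoc]; exact kernel.condition e
      set u : kernel e ⟶ kernel (cokernel.π p) := kernel.lift _ (kernel.ι e ≫ r) hu0 with hudef
      have hu : u ≫ kernel.ι (cokernel.π p) = kernel.ι e ≫ r := kernel.lift_ι _ _ _
      have hj0 : kernel.ι r ≫ e = 0 := by
        rw [hedef, ← Category.assoc, kernel.condition, Limits.zero_comp]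
      set j : kernel r ⟶ kernel e := kernel.lift e (kernel.ι r) hj0 with hjdef
      have hj : j ≫ kernel.ι e = kernel.ι r := kernel.lift_ι _ _ _
      haveI hepiu : Epi u := by
        rw [epi_iff_surjective_up_to_refinements]
        intro Z z
        have hw0 : pullback.snd (z ≫ kernel.ι (cokernel.π p)) r ≫ e = 0 := by
          rw [hedef, ← Category.assoc, ← pullback.condition, Category.assoc, Category.assoc,
            kernel.condition, Limits.comp_zero, Limits.comp_zero]
        refine ⟨pullback (z ≫ kernel.ι (cokernel.π p)) r, pullback.fst _ _, inferInstance,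
          kernel.lift e _ hw0, ?_⟩
        rw [← cancel_mono (kernel.ι (cokernel.π p)), Category.assoc, Category.assoc, hu,
          ← Category.assoc (kernel.lift e _ hw0), kernel.lift_ι]
        exact pullback.condition
      have hju : j ≫ u = 0 := by
        rw [← cancel_mono (kernel.ι (cokernel.π p)), Category.assoc, hu, Limits.zero_comp,
          ← Category.assoc, hj, kernel.condition]
      have hexactju : (ShortComplex.mk j u hju).Exact := by
        rw [ShortComplex.exact_iff_exact_up_to_refinements]
        intro Z x₂ hx₂
        have h1 : (x₂ ≫ kernel.ι e) ≫ r = 0 := by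
          rw [Category.assoc, ← hu, ← Category.assoc]
          change (x₂ ≫ u) ≫ kernel.ι (cokernel.π p) = 0
          rw [hx₂, Limits.zero_comp]
        refine ⟨Z, 𝟙 Z, inferInstance, kernel.lift r (x₂ ≫ kernel.ι e) h1, ?_⟩
        rw [Category.id_comp, ← cancel_mono (kernel.ι e), Category.assoc, hj, kernel.lift_ι]
      have hExtR : ExtProp X r := (ext1Zero_iff_extProp V₀ X r).1 (hrig V₀ hV₀ X hX)
      obtain ⟨g₁, hg₁⟩ := hExtR (j ≫ h)
      have hφj : j ≫ (h - kernel.ι e ≫ g₁) = 0 := by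
        rw [Preadditive.comp_sub, ← Category.assoc, hj, hg₁, sub_self]
      obtain ⟨h₁, hh₁⟩ := hexactju.desc' (h - kernel.ι e ≫ g₁) hφj
      have hfac : Abelian.factorThruImage p ≫ kernel.ι (cokernel.π p) = p := Abelian.image.fac p
      obtain ⟨s, hs⟩ := keyLift X hX (Abelian.factorThruImage p ≫ h₁)
      have hs' : kernel.ι (cokernel.π p) ≫ s = h₁ := by
        rw [← cancel_epi (Abelian.factorThruImage p), ← Category.assoc, hfac]
        exact hs
      refine ⟨g₁ + r ≫ s, ?_⟩
      have hh2 : kernel.ι e ≫ r ≫ s = u ≫ h₁ := by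
        rw [← Category.assoc, ← hu, Category.assoc, hs']
      rw [Preadditive.comp_add, hh2, hh₁, add_comm]
      exact sub_add_cancel h (kernel.ι e ≫ g₁)
    refine ⟨V₀, ⟨mem_fac_self hV₀, fun Z hZ => hrig V₀ hV₀ Z hZ⟩, cokernel p,
      ⟨fac_quot (mem_fac_self hV₀) (cokernel.π p) inferInstance,
        fun Z hZ => hCcExt Z hZ⟩,
      p, cokernel.π p, cokernel.condition p, ?_, inferInstance, ?_⟩
    · exact ShortComplex.exact_of_g_is_cokernel _ (cokernelIsCokernel p)
    · intro M' hM' h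
      exact keyLift M' (hsub hM') h
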